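/- Let S be a positive integer and ℓ₁, ℓ₂ ∈ ℂ. If g₁ is a mod-S polyexponential of base ℓ₁ and g₂ is a mod-S polyexponential of base ℓ₂, then the convolution g₁ * g₂ is the sum of a mod-S polyexponential of base ℓ₁ and a mod-S polyexponential of base ℓ₂. -/

import Mathlib

open Polynomial Finset


private lemma lem_small {V : Polynomial ℂ} {d : ℕ} (h1 : V.natDegree ≤ d) (h2 : V.coeff d = 0) :
    V = 0 ∨ V.natDegree < d := by
  by_cases hV : V = 0
  · exact Or.inl hV
  · right
    rcases lt_or_eq_of_le h1 with h | h
    · exact h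
    · exact absurd (by rw [Polynomial.leadingCoeff, h]; exact h2)
        (Polynomial.leadingCoeff_ne_zero.mpr hV)

private lemma lemSurj (L : Polynomial ℂ → Polynomial ℂ)
    (hadd : ∀ a b, L (a + b) = L a + L b)
    (hred : ∀ W : Polynomial ℂ, W ≠ 0 →
      ∃ P₀, W - L P₀ = 0 ∨ (W - L P₀).natDegree < W.natDegree) :
    ∀ W, ∃ P, L P = W := by
  have h0 : L 0 = 0 := by have := hadd 0 0; simpa using this
  suffices H : ∀ d W, Polynomial.natDegree W ≤ d → ∃ P, L P = W from
    fun W => H W.natDegree W le_rfl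
  intro d
  induction d with
  | zero =>
    intro W h
    by_cases hW : W = 0
    · exact ⟨0, by rw [h0, hW]⟩
    · obtain ⟨P₀, hP₀ | hP₀⟩ := hred W hW
      · exact ⟨P₀, (sub_eq_zero.mp hP₀).symm⟩
      · omega
  | succ d ih =>
    intro W h
    by_cases hW : W = 0
    · exact ⟨0, by rw [h0, hW]⟩
    · obtain ⟨P₀, hP₀ | hP₀⟩ := hred W hW
      · exact ⟨P₀, (sub_eq_zero.mp hP₀).symm⟩
      · obtain ⟨P', hP'⟩ := ih (W - L P₀) (by omega)
        exact ⟨P₀ + P', by rw [hadd, hP']; ring⟩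


private lemma hX1nd : (X + 1 : Polynomial ℂ).natDegree = 1 := by
  simpa using natDegree_X_add_C (1:ℂ)

private lemma hX1mon : (X + 1 : Polynomial ℂ).Monic := by
  simpa using monic_X_add_C (1:ℂ)

private lemma lemL {ℓ₁ ℓ₂ : ℂ} (h : ℓ₁ ≠ ℓ₂) :
    ∀ W : Polynomial ℂ, ∃ P : Polynomial ℂ,
      C ℓ₁ * P.comp (X + 1) - C ℓ₂ * P = W := by
  have hd : ℓ₁ - ℓ₂ ≠ 0 := sub_ne_zero.mpr h
  apply lemSurj
  · intro a b; simp [add_comp]; ring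
  · intro W hW
    set d := W.natDegree with hdd
    set a : ℂ := W.leadingCoeff / (ℓ₁ - ℓ₂) with ha
    refine ⟨C a * X ^ d, ?_⟩
    have hcomp : (C a * X ^ d).comp (X + 1) = C a * (X + 1) ^ d := by
      simp [mul_comp, pow_comp]
    have hc1 : ((X + 1 : Polynomial ℂ) ^ d).coeff d = 1 := by
      simpa using Polynomial.coeff_X_add_one_pow ℂ d d
    set V := W - (C ℓ₁ * (C a * X ^ d).comp (X + 1) - C ℓ₂ * (C a * X ^ d)) with hV
    have hcoeff : V.coeff d = 0 := by
      rw [hV, hcomp, coeff_sub, coeff_sub, coeff_C_mul, coeff_C_mul, coeff_C_mul,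
        coeff_C_mul, hc1, coeff_X_pow, if_pos rfl]
      simp only [mul_one]
      have hWc : W.coeff d = W.leadingCoeff := rfl
      rw [hWc, ha]
      field_simp
      ring
    have hdeg : V.natDegree ≤ d := by
      rw [hV, hcomp]
      refine le_trans (natDegree_sub_le _ _) (max_le le_rfl ?_)
      refine le_trans (natDegree_sub_le _ _) (max_le ?_ ?_)
      · refine le_trans natDegree_mul_le ?_
        simp only [natDegree_C, Nat.zero_add, zero_add]
        refine le_trans natDegree_mul_le ?_
        simp [natDegree_C, natDegree_pow, hX1nd]
      · refine le_trans natDegree_mul_le ?_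
        simp only [natDegree_C, zero_add]
        refine le_trans natDegree_mul_le ?_
        simp [natDegree_C, natDegree_X_pow]
    exact lem_small hdeg hcoeff

private lemma lemAD : ∀ W : Polynomial ℂ, ∃ Q : Polynomial ℂ,
    Q.comp (X + 1) - Q = W := by
  apply lemSurj
  · intro a b; simp [add_comp]; ring
  · intro W hW
    set d := W.natDegree with hdd
    set a : ℂ := W.leadingCoeff / (d + 1) with ha
    refine ⟨C a * X ^ (d + 1), ?_⟩
    have hcomp : (C a * X ^ (d+1)).comp (X + 1) = C a * (X + 1) ^ (d+1) := by
      simp [mul_comp, pow_comp]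
    have hd1 : ((d : ℂ) + 1) ≠ 0 := Nat.cast_add_one_ne_zero d
    have hc1 : ((X + 1 : Polynomial ℂ) ^ (d+1)).coeff d = (d : ℂ) + 1 := by
      have := Polynomial.coeff_X_add_one_pow ℂ (d+1) d
      rw [this, Nat.choose_succ_self_right]
      push_cast; ring
    set V := W - ((C a * X ^ (d+1)).comp (X + 1) - C a * X ^ (d+1)) with hV
    have hcoeff : V.coeff d = 0 := by
      rw [hV, hcomp, coeff_sub, coeff_sub, coeff_C_mul, coeff_C_mul, hc1, coeff_X_pow,
        if_neg (by omega)]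
      have hWc : W.coeff d = W.leadingCoeff := rfl
      rw [hWc, ha]
      field_simp
      ring
    have hdeg : V.natDegree ≤ d := by
      rw [hV, hcomp]
      have h1 : C a * (X + 1 : Polynomial ℂ) ^ (d+1) - C a * X ^ (d+1) =
          C a * ((X + 1) ^ (d+1) - X ^ (d+1)) := by ring
      have hdlt : (((X + 1 : Polynomial ℂ) ^ (d+1)) - X ^ (d+1)).natDegree ≤ d := by
        have hsm := lem_small (V := ((X + 1 : Polynomial ℂ) ^ (d+1)) - X ^ (d+1)) (d := d+1)
          (le_trans (natDegree_sub_le _ _)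
            (by simp [natDegree_pow, natDegree_X_pow, hX1nd]))
          (by rw [coeff_sub, coeff_X_pow, if_pos rfl,
                Polynomial.coeff_X_add_one_pow ℂ (d+1) (d+1)]; simp)
        rcases hsm with h | h
        · rw [h]; simp
        · omega
      refine le_trans (natDegree_sub_le _ _) (max_le le_rfl ?_)
      rw [h1]
      exact le_trans natDegree_mul_le (by simp [natDegree_C, hdlt])
    exact lem_small hdeg hcoeff

private lemma lemRec {ℓ₁ ℓ₂ : ℂ} (hℓ₂ : ℓ₂ ≠ 0) (W₁ W₂ : Polynomial ℂ)
    (hW : ℓ₁ ≠ ℓ₂ ∨ W₁ = 0) (u : ℕ → ℂ) (N : ℕ)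
    (hu : ∀ n, N ≤ n → u (n+1) = ℓ₂ * u n + W₁.eval (n:ℂ) * ℓ₁^n + W₂.eval (n:ℂ) * ℓ₂^n) :
    ∃ (P R : Polynomial ℂ) (N' : ℕ), ∀ n, N' ≤ n →
      u n = P.eval (n:ℂ) * ℓ₁^n + R.eval (n:ℂ) * ℓ₂^n := by
  obtain ⟨P, hP⟩ : ∃ P : Polynomial ℂ, ∀ x : ℂ,
      ℓ₁ * P.eval (x+1) - ℓ₂ * P.eval x = W₁.eval x := by
    rcases hW with h | h
    · obtain ⟨P, hP⟩ := lemL h W₁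
      refine ⟨P, fun x => ?_⟩
      have := congrArg (Polynomial.eval x) hP
      simpa [eval_comp] using this
    · exact ⟨0, fun x => by simp [h]⟩
  obtain ⟨R₁, hR₁⟩ := lemAD (C ℓ₂⁻¹ * W₂)
  have hR1 : ∀ x : ℂ, ℓ₂ * R₁.eval (x+1) - ℓ₂ * R₁.eval x = W₂.eval x := by
    intro x
    have := congrArg (Polynomial.eval x) hR₁
    simp [eval_comp] at this
    linear_combination ℓ₂ * this + (W₂.eval x) * mul_inv_cancel₀ hℓ₂
  set v : ℕ → ℂ := fun n => u n - P.eval (n:ℂ) * ℓ₁^n - R₁.eval (n:ℂ) * ℓ₂^n with hv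
  have hvrec : ∀ n, N ≤ n → v (n+1) = ℓ₂ * v n := by
    intro n hn
    have h1 := hP (n:ℂ)
    have h2 := hR1 (n:ℂ)
    have h3 := hu n hn
    simp only [hv]
    push_cast
    rw [pow_succ, pow_succ]
    linear_combination h3 - ℓ₁^n * h1 - ℓ₂^n * h2
  have hgeo : ∀ n, N ≤ n → v n = v N * ℓ₂^(n - N) := by
    intro n hn
    induction n, hn using Nat.le_induction with
    | base => simp
    | succ n hn ih =>
      rw [hvrec n hn, ih, show n + 1 - N = (n - N) + 1 by omega, pow_succ]
      ring
  refine ⟨P, R₁ + C (v N / ℓ₂^N), N, fun n hn => ?_⟩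
  have h4 : ℓ₂^n = ℓ₂^N * ℓ₂^(n-N) := by
    rw [← pow_add]; congr 1; omega
  have h5 : v n = (v N / ℓ₂^N) * ℓ₂^n := by
    rw [hgeo n hn, h4]
    field_simp
  simp only [eval_add, eval_C]
  have h6 : u n = P.eval (n:ℂ) * ℓ₁^n + R₁.eval (n:ℂ) * ℓ₂^n + v n := by
    simp only [hv]; ring
  rw [h6, h5]
  ring

private noncomputable def Tsum (ℓ₁ ℓ₂ : ℂ) (p r : Polynomial ℂ) (n : ℕ) : ℂ :=
  ∑ a ∈ Finset.range (n+1), p.eval (a:ℂ) * ℓ₁^a * r.eval ((n - a : ℕ):ℂ) * ℓ₂^(n-a)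

private lemma Tsum_rec (ℓ₁ ℓ₂ : ℂ) (p r : Polynomial ℂ) (n : ℕ) :
    Tsum ℓ₁ ℓ₂ p r (n+1) =
      r.eval 0 * p.eval ((n:ℂ)+1) * ℓ₁^(n+1)
      + ℓ₂ * Tsum ℓ₁ ℓ₂ p (r.comp (X+1) - r) n + ℓ₂ * Tsum ℓ₁ ℓ₂ p r n := by
  unfold Tsum
  rw [Finset.sum_range_succ]
  have h1 : ∀ a ∈ Finset.range (n+1),
      p.eval (a:ℂ) * ℓ₁^a * r.eval ((n+1-a:ℕ):ℂ) * ℓ₂^(n+1-a)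
      = ℓ₂ * (p.eval (a:ℂ) * ℓ₁^a * (r.comp (X+1) - r).eval ((n-a:ℕ):ℂ) * ℓ₂^(n-a))
        + ℓ₂ * (p.eval (a:ℂ) * ℓ₁^a * r.eval ((n-a:ℕ):ℂ) * ℓ₂^(n-a)) := by
    intro a ha
    rw [Finset.mem_range] at ha
    have hm : n + 1 - a = (n - a) + 1 := by omega
    rw [hm]
    simp only [eval_sub, eval_comp, eval_add, eval_X, eval_one]
    push_cast
    rw [pow_succ]
    ring
  rw [Finset.sum_congr rfl h1, Finset.sum_add_distrib, ← Finset.mul_sum, ← Finset.mul_sum]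
  simp only [Nat.sub_self, Nat.cast_zero, pow_zero, mul_one]
  push_cast
  ring

private lemma lemA (ℓ₁ ℓ₂ : ℂ) (p r : Polynomial ℂ) :
    ∃ (P R : Polynomial ℂ) (N : ℕ), ∀ n, N ≤ n →
      Tsum ℓ₁ ℓ₂ p r n = P.eval (n:ℂ) * ℓ₁^n + R.eval (n:ℂ) * ℓ₂^n := by
  by_cases hℓ₂ : ℓ₂ = 0
  · subst hℓ₂
    refine ⟨C (r.eval 0) * p, 0, 0, fun n _ => ?_⟩
    unfold Tsum
    rw [Finset.sum_eq_single n]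
    · simp; ring
    · intro b hb hbn
      rw [Finset.mem_range] at hb
      rw [zero_pow (by omega : n - b ≠ 0)]
      ring
    · intro hn
      exact absurd (Finset.self_mem_range_succ n) hn
  · suffices H : ∀ d : ℕ, ∀ r : Polynomial ℂ, r.natDegree < d →
        ∃ (P R : Polynomial ℂ) (N : ℕ), ∀ n, N ≤ n →
          Tsum ℓ₁ ℓ₂ p r n = P.eval (n:ℂ) * ℓ₁^n + R.eval (n:ℂ) * ℓ₂^n from
      H (r.natDegree + 1) r (by omega)
    have lemStep : ∀ r : Polynomial ℂ,
        (∃ (A B : Polynomial ℂ) (N₀ : ℕ), ∀ n, N₀ ≤ n →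
          Tsum ℓ₁ ℓ₂ p (r.comp (X+1) - r) n = A.eval (n:ℂ) * ℓ₁^n + B.eval (n:ℂ) * ℓ₂^n) →
        ∃ (P R : Polynomial ℂ) (N : ℕ), ∀ n, N ≤ n →
          Tsum ℓ₁ ℓ₂ p r n = P.eval (n:ℂ) * ℓ₁^n + R.eval (n:ℂ) * ℓ₂^n := by
      intro r hΔ
      obtain ⟨A, B, N₀, hAB⟩ := hΔ
      by_cases hcase : ℓ₁ = ℓ₂
      · subst hcase
        apply lemRec hℓ₂ 0 (C ℓ₁ * (C (r.eval 0) * p.comp (X+1) + A + B)) (Or.inr rfl) _ N₀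
        intro n hn
        rw [Tsum_rec, hAB n hn]
        simp only [eval_mul, eval_add, eval_C, eval_comp, eval_X, eval_one, eval_zero]
        rw [pow_succ]
        ring
      · apply lemRec hℓ₂ (C (r.eval 0 * ℓ₁) * p.comp (X+1) + C ℓ₂ * A) (C ℓ₂ * B)
          (Or.inl hcase) _ N₀
        intro n hn
        rw [Tsum_rec, hAB n hn]
        simp only [eval_mul, eval_add, eval_C, eval_comp, eval_X, eval_one]
        rw [pow_succ]
        ring
    intro d
    induction d with
    | zero => intro r h; omega
    | succ d ih =>
      intro r hr
      by_cases hΔ0 : r.comp (X+1) - r = 0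
      · apply lemStep
        refine ⟨0, 0, 0, fun n _ => ?_⟩
        rw [hΔ0]
        simp [Tsum]
      · apply lemStep
        apply ih
        have hr0 : r ≠ 0 := by
          intro h; apply hΔ0; rw [h]; simp
        have hrd : r.natDegree ≠ 0 := by
          intro h
          obtain ⟨c, hc⟩ := Polynomial.natDegree_eq_zero.mp h
          apply hΔ0
          rw [← hc]
          simp
        have hcompnd : (r.comp (X+1)).natDegree = r.natDegree := by
          rw [natDegree_comp, hX1nd, mul_one]
        have hcomp0 : r.comp (X+1) ≠ 0 := by
          intro h
          have := Polynomial.leadingCoeff_comp (q := X + 1) (p := r) (by rw [hX1nd]; omega)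
          rw [h, hX1mon.leadingCoeff] at this
          simp at this
          exact hr0 (Polynomial.leadingCoeff_eq_zero.mp this.symm)
        have hdeglt : (r.comp (X+1) - r).degree < (r.comp (X+1)).degree := by
          apply Polynomial.degree_sub_lt
          · rw [degree_eq_natDegree hcomp0, degree_eq_natDegree hr0, hcompnd]
          · exact hcomp0
          · rw [Polynomial.leadingCoeff_comp (by rw [hX1nd]; omega), hX1mon.leadingCoeff]
            simp
        have := Polynomial.natDegree_lt_natDegree hΔ0
          (by rwa [degree_eq_natDegree hcomp0, ← degree_eq_natDegree hcomp0] at hdeglt)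
        omega


/-- The convolution of two functions on the non-negative integers:
`(g₁ * g₂)(k) = Σ_{j=0}^{k} g₁(j) g₂(k−j)`. -/
noncomputable def conv (g₁ g₂ : ℕ → ℂ) (k : ℕ) : ℂ :=
  ∑ j ∈ Finset.range (k + 1), g₁ j * g₂ (k - j)

/-- `g : ℕ → ℂ` is a mod-`S` polyexponential of base `ℓ`: there are `K ∈ ℕ` and
polynomials `q₀, …, q_{S−1}` such that for every `k ≥ K`, writing `k = jS + i` with
`0 ≤ i ≤ S−1` (so `j = k / S` and `i = k % S`), one has `g(k) = q_i(j) ℓ^j`. -/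
def IsModPolyexp (S : ℕ) (ℓ : ℂ) (g : ℕ → ℂ) : Prop :=
  ∃ (K : ℕ) (q : ℕ → Polynomial ℂ), ∀ k : ℕ, K ≤ k →
    g k = (q (k % S)).eval ((k / S : ℕ) : ℂ) * ℓ ^ (k / S)


private lemma mpe_zero (S : ℕ) (ℓ : ℂ) : IsModPolyexp S ℓ (fun _ => 0) :=
  ⟨0, fun _ => 0, fun k _ => by simp⟩

private lemma mpe_congr {S : ℕ} {ℓ : ℂ} {f g : ℕ → ℂ} (N : ℕ)
    (h : ∀ k, N ≤ k → f k = g k) (hf : IsModPolyexp S ℓ f) : IsModPolyexp S ℓ g := by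
  obtain ⟨K, q, hq⟩ := hf
  refine ⟨max K N, q, fun k hk => ?_⟩
  rw [← h k (le_trans (le_max_right _ _) hk)]
  exact hq k (le_trans (le_max_left _ _) hk)

private lemma mpe_add {S : ℕ} {ℓ : ℂ} {f g : ℕ → ℂ}
    (hf : IsModPolyexp S ℓ f) (hg : IsModPolyexp S ℓ g) :
    IsModPolyexp S ℓ (fun k => f k + g k) := by
  obtain ⟨K₁, q₁, hq₁⟩ := hf
  obtain ⟨K₂, q₂, hq₂⟩ := hg
  refine ⟨max K₁ K₂, fun i => q₁ i + q₂ i, fun k hk => ?_⟩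
  simp only []
  rw [hq₁ k (le_trans (le_max_left _ _) hk), hq₂ k (le_trans (le_max_right _ _) hk)]
  simp only [eval_add]
  ring

private lemma mpe_smul {S : ℕ} {ℓ : ℂ} {f : ℕ → ℂ} (c : ℂ)
    (hf : IsModPolyexp S ℓ f) : IsModPolyexp S ℓ (fun k => c * f k) := by
  obtain ⟨K, q, hq⟩ := hf
  refine ⟨K, fun i => C c * q i, fun k hk => ?_⟩
  simp only []
  rw [hq k hk]
  simp only [eval_mul, eval_C]
  ring

private lemma mpe_sum {S : ℕ} {ℓ : ℂ} {ι : Type*} (s : Finset ι) (F : ι → ℕ → ℂ)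
    (h : ∀ i ∈ s, IsModPolyexp S ℓ (F i)) :
    IsModPolyexp S ℓ (fun k => ∑ i ∈ s, F i k) := by
  classical
  induction s using Finset.induction with
  | empty => simpa using mpe_zero S ℓ
  | @insert x s hx ih =>
    have h1 : IsModPolyexp S ℓ (fun k => F x k + ∑ i ∈ s, F i k) :=
      mpe_add (h x (Finset.mem_insert_self x s))
        (ih fun i hi => h i (Finset.mem_insert_of_mem hi))
    exact mpe_congr 0 (fun k _ => by rw [Finset.sum_insert hx]) h1

private lemma nat_sub_key {S n b i c k j : ℕ} (h1 : S * n + i = k) (h2 : S * b + c = j)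
    (hbn : b ≤ n) (hci : c ≤ i) : k - j = (i - c) + S * (n - b) := by
  have e1 : S * (n - b) + S * b = S * n := by rw [← Nat.mul_add]; congr 1; omega
  omega

private lemma nat_sub_key2 {S n b i c k j : ℕ} (h1 : S * n + i = k) (h2 : S * b + c = j)
    (hbn : b + 1 ≤ n) (hci : i < c) (hcS : c < S) : k - j = (i + S - c) + S * (n - (b+1)) := by
  have e1 : S * (n - (b+1)) + S * (b+1) = S * n := by rw [← Nat.mul_add]; congr 1; omega
  have e2 : S * (b+1) = S * b + S := by ring
  omega

private lemma mpe_shift {S : ℕ} (hS : 0 < S) {ℓ : ℂ} {g : ℕ → ℂ} (j : ℕ)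
    (hg : IsModPolyexp S ℓ g) : IsModPolyexp S ℓ (fun k => g (k - j)) := by
  obtain ⟨K, q, hq⟩ := hg
  by_cases hℓ : ℓ = 0
  · subst hℓ
    refine ⟨max K S + j, fun _ => 0, fun k hk => ?_⟩
    simp only [eval_zero, zero_mul]
    rw [hq (k - j) (by omega)]
    have hd : (k - j) / S ≠ 0 := by
      have : 1 ≤ (k - j) / S := (Nat.one_le_div_iff hS).mpr (by omega)
      omega
    rw [zero_pow hd, mul_zero]
  · set b := j / S with hb
    set c := j % S with hc
    have hcS : c < S := Nat.mod_lt _ hS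
    have hj : S * b + c = j := by rw [hb, hc]; exact Nat.div_add_mod j S
    refine ⟨K + j + S * (b + 1), fun i =>
      if c ≤ i then C (ℓ^b)⁻¹ * (q (i - c)).comp (X - C (b:ℂ))
      else C (ℓ^(b+1))⁻¹ * (q (i + S - c)).comp (X - C ((b:ℂ)+1)), fun k hk => ?_⟩
    simp only []
    set n := k / S with hn
    set i := k % S with hi
    have hiS : i < S := Nat.mod_lt _ hS
    have hk1 : S * n + i = k := by rw [hn, hi]; exact Nat.div_add_mod k S
    have hnb : b + 1 ≤ n := by
      rw [hn]
      apply (Nat.le_div_iff_mul_le hS).mpr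
      have hcm : (b + 1) * S = S * (b + 1) := Nat.mul_comm _ _
      omega
    have hKkj : K ≤ k - j := by omega
    by_cases hci : c ≤ i
    · have key : k - j = (i - c) + S * (n - b) := nat_sub_key hk1 hj (by omega) hci
      have hmod : (k - j) % S = i - c := by
        rw [key, Nat.add_mul_mod_self_left, Nat.mod_eq_of_lt (by omega)]
      have hdiv : (k - j) / S = n - b := by
        rw [key, Nat.add_mul_div_left _ _ hS, Nat.div_eq_of_lt (by omega), Nat.zero_add]
      rw [hq (k - j) hKkj, hmod, hdiv, if_pos hci]
      simp only [eval_mul, eval_C, eval_comp, eval_sub, eval_X]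
      rw [Nat.cast_sub (by omega : b ≤ n)]
      have hpow : ℓ^n = ℓ^(n-b) * ℓ^b := by
        rw [← pow_add]; congr 1; omega
      rw [hpow]
      field_simp
    · have key : k - j = (i + S - c) + S * (n - (b+1)) :=
        nat_sub_key2 hk1 hj hnb (by omega) hcS
      have hmod : (k - j) % S = i + S - c := by
        rw [key, Nat.add_mul_mod_self_left, Nat.mod_eq_of_lt (by omega)]
      have hdiv : (k - j) / S = n - (b+1) := by
        rw [key, Nat.add_mul_div_left _ _ hS, Nat.div_eq_of_lt (by omega), Nat.zero_add]
      rw [hq (k - j) hKkj, hmod, hdiv, if_neg hci]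
      simp only [eval_mul, eval_C, eval_comp, eval_sub, eval_X, eval_add, eval_one]
      rw [Nat.cast_sub (by omega : b + 1 ≤ n)]
      have hpow : ℓ^n = ℓ^(n-(b+1)) * ℓ^(b+1) := by
        rw [← pow_add]; congr 1; omega
      rw [hpow]
      push_cast
      field_simp

private lemma lemHalf {S : ℕ} (hS : 0 < S) (ℓ : ℂ) (P : ℕ → Polynomial ℂ) (δ : ℕ → ℕ)
    (hδ : ∀ t, δ t ≤ 1) :
    IsModPolyexp S ℓ
      (fun k => (P (k % S)).eval ((k / S - δ (k % S) : ℕ) : ℂ) * ℓ ^ (k / S - δ (k % S))) := by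
  by_cases hℓ : ℓ = 0
  · subst hℓ
    refine ⟨2 * S, fun _ => 0, fun k hk => ?_⟩
    simp only [eval_zero, zero_mul]
    have h2 : 2 ≤ k / S := (Nat.le_div_iff_mul_le hS).mpr (by omega)
    rw [zero_pow (by have := hδ (k % S); omega : k / S - δ (k % S) ≠ 0), mul_zero]
  · refine ⟨S, fun t => C (ℓ^(δ t))⁻¹ * (P t).comp (X - C ((δ t : ℕ) : ℂ)), fun k hk => ?_⟩
    simp only [eval_mul, eval_C, eval_comp, eval_sub, eval_X]
    set t := k % S
    set n := k / S with hn
    have h1 : 1 ≤ n := (Nat.le_div_iff_mul_le hS).mpr (by omega)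
    have hδn : δ t ≤ n := le_trans (hδ t) h1
    rw [Nat.cast_sub hδn]
    have hpow : ℓ^n = ℓ^(n - δ t) * ℓ^(δ t) := by
      rw [← pow_add]; congr 1; omega
    rw [hpow]
    field_simp

private lemma core_i {S : ℕ} (hS : 0 < S) (ℓ₁ ℓ₂ : ℂ) (q₁ q₂ : ℕ → Polynomial ℂ)
    (i : ℕ) (hiS : i < S) :
    ∃ (F₁ F₂ : ℕ → ℂ) (N : ℕ), IsModPolyexp S ℓ₁ F₁ ∧ IsModPolyexp S ℓ₂ F₂ ∧
      ∀ k, N ≤ k →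
        (∑ j ∈ Finset.range (k+1), if j % S = i then
            ((q₁ (j % S)).eval ((j / S : ℕ):ℂ) * ℓ₁ ^ (j / S)) *
            ((q₂ ((k-j) % S)).eval (((k-j) / S : ℕ):ℂ) * ℓ₂ ^ ((k-j) / S)) else 0)
        = F₁ k + F₂ k := by
  classical
  set τ : ℕ → ℕ := fun t => (t + S - i) % S with hτ
  set δ : ℕ → ℕ := fun t => if i ≤ t then 0 else 1 with hδ
  have hδ1 : ∀ t, δ t ≤ 1 := fun t => by simp only [hδ]; split <;> omega
  have hlemA := fun t => lemA ℓ₁ ℓ₂ (q₁ i) (q₂ (τ t))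
  choose P R N hPRN using hlemA
  set NN := Finset.sup (Finset.range S) N with hNN
  refine ⟨fun k => (P (k % S)).eval ((k / S - δ (k % S) : ℕ):ℂ) * ℓ₁ ^ (k / S - δ (k % S)),
    fun k => (R (k % S)).eval ((k / S - δ (k % S) : ℕ):ℂ) * ℓ₂ ^ (k / S - δ (k % S)),
    S * (2 + NN), lemHalf hS ℓ₁ P δ hδ1, lemHalf hS ℓ₂ R δ hδ1, fun k hk => ?_⟩
  set t := k % S with ht
  set n := k / S with hn
  have htS : t < S := Nat.mod_lt _ hS
  have hk1 : S * n + t = k := by rw [hn, ht]; exact Nat.div_add_mod k S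
  have hnbig : 2 + NN ≤ n := by
    rw [hn]
    apply (Nat.le_div_iff_mul_le hS).mpr
    have hcm : (2 + NN) * S = S * (2 + NN) := Nat.mul_comm _ _
    omega
  have hNt : N t ≤ NN := Finset.le_sup (Finset.mem_range.mpr htS)
  set m := n - δ t with hm
  have hmN : N t ≤ m := by
    have := hδ1 t; omega
  -- step 1 : the sum equals Tsum ℓ₁ ℓ₂ (q₁ i) (q₂ (τ t)) m
  have hstep : (∑ j ∈ Finset.range (k+1), if j % S = i then
            ((q₁ (j % S)).eval ((j / S : ℕ):ℂ) * ℓ₁ ^ (j / S)) *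
            ((q₂ ((k-j) % S)).eval (((k-j) / S : ℕ):ℂ) * ℓ₂ ^ ((k-j) / S)) else 0)
      = Tsum ℓ₁ ℓ₂ (q₁ i) (q₂ (τ t)) m := by
    rw [← Finset.sum_filter]
    unfold Tsum
    apply Finset.sum_nbij' (i := fun j => j / S) (j := fun a => i + S * a)
    · intro j hj
      simp only [Finset.mem_filter, Finset.mem_range] at hj
      obtain ⟨hjk, hjmod⟩ := hj
      have hji : S * (j / S) + i = j := by
        conv_rhs => rw [← Nat.div_add_mod j S]
        rw [hjmod]
      rw [Finset.mem_range]
      by_cases hit : i ≤ t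
      · have : j / S ≤ n := by rw [hn]; exact Nat.div_le_div_right (by omega)
        have : δ t = 0 := by rw [hδ]; simp [hit]
        omega
      · have hjn : j / S < n := by
          by_contra hcon
          push_neg at hcon
          have : S * n ≤ S * (j / S) := Nat.mul_le_mul_left S hcon
          omega
        have : δ t = 1 := by rw [hδ]; simp [hit]
        omega
    · intro a ha
      rw [Finset.mem_range] at ha
      simp only [Finset.mem_filter, Finset.mem_range]
      constructor
      · by_cases hit : i ≤ t
        · have hδ0 : δ t = 0 := by rw [hδ]; simp [hit]
          have ham : a ≤ n := by omega
          have : S * a ≤ S * n := Nat.mul_le_mul_left S ham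
          omega
        · have hδ0 : δ t = 1 := by rw [hδ]; simp [hit]
          have ham : a + 1 ≤ n := by omega
          have h1 : S * (a+1) ≤ S * n := Nat.mul_le_mul_left S ham
          have h2 : S * (a+1) = S * a + S := by ring
          omega
      · rw [Nat.add_mul_mod_self_left, Nat.mod_eq_of_lt hiS]
    · intro j hj
      simp only [Finset.mem_filter, Finset.mem_range] at hj
      conv_rhs => rw [← Nat.div_add_mod j S]
      rw [hj.2]; ring
    · intro a ha
      rw [Nat.add_mul_div_left _ _ hS, Nat.div_eq_of_lt hiS, Nat.zero_add]
    · intro j hj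
      simp only [Finset.mem_filter, Finset.mem_range] at hj
      obtain ⟨hjk, hjmod⟩ := hj
      have hji : S * (j / S) + i = j := by
        conv_rhs => rw [← Nat.div_add_mod j S]
        rw [hjmod]
      set a := j / S with haj
      by_cases hit : i ≤ t
      · have hδ0 : δ t = 0 := by rw [hδ]; simp [hit]
        have han : a ≤ n := by rw [haj, hn]; exact Nat.div_le_div_right (by omega)
        have hτt : τ t = t - i := by
          rw [hτ]
          simp only []
          have he : t + S - i = (t - i) + S * 1 := by omega
          rw [he, Nat.add_mul_mod_self_left, Nat.mod_eq_of_lt (by omega)]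
        have hkey : k - j = (t - i) + S * (n - a) := by
          rw [← hji]
          exact nat_sub_key hk1 rfl (by omega) hit
        have hmod2 : (k - j) % S = t - i := by
          rw [hkey, Nat.add_mul_mod_self_left, Nat.mod_eq_of_lt (by omega)]
        have hdiv2 : (k - j) / S = n - a := by
          rw [hkey, Nat.add_mul_div_left _ _ hS, Nat.div_eq_of_lt (by omega), Nat.zero_add]
        rw [hjmod, hmod2, hdiv2, hτt]
        have hma : m - a = n - a := by omega
        rw [← hma]
        ring
      · have hδ0 : δ t = 1 := by rw [hδ]; simp [hit]
        have han : a + 1 ≤ n := by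
          by_contra hcon
          push_neg at hcon
          have : S * n ≤ S * a := Nat.mul_le_mul_left S (by omega)
          omega
        have hτt : τ t = t + S - i := by
          rw [hτ]
          simp only []
          rw [Nat.mod_eq_of_lt (by omega)]
        have hkey : k - j = (t + S - i) + S * (n - (a+1)) := by
          rw [← hji]
          exact nat_sub_key2 hk1 rfl han (by omega) hiS
        have hmod2 : (k - j) % S = t + S - i := by
          rw [hkey, Nat.add_mul_mod_self_left, Nat.mod_eq_of_lt (by omega)]
        have hdiv2 : (k - j) / S = n - (a+1) := by
          rw [hkey, Nat.add_mul_div_left _ _ hS, Nat.div_eq_of_lt (by omega), Nat.zero_add]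
        rw [hjmod, hmod2, hdiv2, hτt]
        have hma : m - a = n - (a+1) := by omega
        rw [← hma]
        ring
  rw [hstep, hPRN t m hmN]

/-- The convolution of a mod-`S` polyexponential of base `ℓ₁` with a mod-`S`
polyexponential of base `ℓ₂` is the sum of a mod-`S` polyexponential of base `ℓ₁`
and a mod-`S` polyexponential of base `ℓ₂`. -/
theorem conv_modPolyexp (S : ℕ) (hS : 0 < S) (ℓ₁ ℓ₂ : ℂ) (g₁ g₂ : ℕ → ℂ)
    (h₁ : IsModPolyexp S ℓ₁ g₁) (h₂ : IsModPolyexp S ℓ₂ g₂) :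
    ∃ f₁ f₂ : ℕ → ℂ, IsModPolyexp S ℓ₁ f₁ ∧ IsModPolyexp S ℓ₂ f₂ ∧
      ∀ k : ℕ, conv g₁ g₂ k = f₁ k + f₂ k := by
  classical
  obtain ⟨K₁, q₁, hq₁⟩ := h₁
  obtain ⟨K₂, q₂, hq₂⟩ := h₂
  set G₁ : ℕ → ℂ := fun k => (q₁ (k % S)).eval ((k / S : ℕ):ℂ) * ℓ₁ ^ (k / S) with hG₁
  set G₂ : ℕ → ℂ := fun k => (q₂ (k % S)).eval ((k / S : ℕ):ℂ) * ℓ₂ ^ (k / S) with hG₂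
  set e₁ : ℕ → ℂ := fun k => g₁ k - G₁ k with he₁
  set e₂ : ℕ → ℂ := fun k => g₂ k - G₂ k with he₂
  have he₁0 : ∀ k, K₁ ≤ k → e₁ k = 0 := fun k hk => by
    rw [he₁]; simp only []; rw [hq₁ k hk]; ring
  have he₂0 : ∀ k, K₂ ≤ k → e₂ k = 0 := fun k hk => by
    rw [he₂]; simp only []; rw [hq₂ k hk]; ring
  have hG₁pe : IsModPolyexp S ℓ₁ G₁ := ⟨0, q₁, fun k _ => rfl⟩
  have hG₂pe : IsModPolyexp S ℓ₂ G₂ := ⟨0, q₂, fun k _ => rfl⟩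
  have hcore := fun i : Fin S => core_i hS ℓ₁ ℓ₂ q₁ q₂ i.val i.isLt
  choose F₁ F₂ Nc hF₁ hF₂ hFeq using hcore
  set CoreF₁ : ℕ → ℂ := fun k => ∑ i : Fin S, F₁ i k with hCF₁
  set CoreF₂ : ℕ → ℂ := fun k => ∑ i : Fin S, F₂ i k with hCF₂
  set HB : ℕ → ℂ := fun k => ∑ j ∈ Finset.range K₁, e₁ j * G₂ (k - j) with hHB
  set HC : ℕ → ℂ := fun k => ∑ m ∈ Finset.range K₂, e₂ m * G₁ (k - m) with hHC
  have hHBpe : IsModPolyexp S ℓ₂ HB :=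
    mpe_sum _ _ (fun j _ => mpe_smul (e₁ j) (mpe_shift hS j hG₂pe))
  have hHCpe : IsModPolyexp S ℓ₁ HC :=
    mpe_sum _ _ (fun m _ => mpe_smul (e₂ m) (mpe_shift hS m hG₁pe))
  have hCF₁pe : IsModPolyexp S ℓ₁ CoreF₁ := mpe_sum _ _ (fun i _ => hF₁ i)
  have hCF₂pe : IsModPolyexp S ℓ₂ CoreF₂ := mpe_sum _ _ (fun i _ => hF₂ i)
  set Nbig := max (K₁ + K₂) (Finset.sup Finset.univ Nc) with hNbig
  have hMain : ∀ k, Nbig ≤ k →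
      conv g₁ g₂ k = (CoreF₁ k + HC k) + (CoreF₂ k + HB k) := by
    intro k hk
    have hkK : K₁ + K₂ ≤ k := le_trans (le_max_left _ _) hk
    unfold conv
    have hsplit : ∀ j ∈ Finset.range (k+1), g₁ j * g₂ (k-j) =
        G₁ j * G₂ (k-j) + e₁ j * G₂ (k-j) + G₁ j * e₂ (k-j) + e₁ j * e₂ (k-j) := by
      intro j _
      rw [he₁, he₂]; simp only []; ring
    rw [Finset.sum_congr rfl hsplit, Finset.sum_add_distrib, Finset.sum_add_distrib,
      Finset.sum_add_distrib]
    have hA : ∑ j ∈ Finset.range (k+1), G₁ j * G₂ (k-j) = CoreF₁ k + CoreF₂ k := by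
      have h1 : ∀ j ∈ Finset.range (k+1), G₁ j * G₂ (k-j) =
          ∑ i : Fin S, (if j % S = (i : ℕ) then
            ((q₁ (j % S)).eval ((j / S : ℕ):ℂ) * ℓ₁ ^ (j / S)) *
            ((q₂ ((k-j) % S)).eval (((k-j) / S : ℕ):ℂ) * ℓ₂ ^ ((k-j) / S)) else 0) := by
        intro j _
        rw [Finset.sum_eq_single (⟨j % S, Nat.mod_lt _ hS⟩ : Fin S)]
        · rw [if_pos rfl, hG₁, hG₂]
        · intro b _ hb
          exact if_neg (fun h => hb (Fin.ext (by rw [← h])))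
        · intro h
          exact absurd (Finset.mem_univ _) h
      rw [Finset.sum_congr rfl h1, Finset.sum_comm]
      have h2 : ∀ i : Fin S, i ∈ Finset.univ →
          (∑ j ∈ Finset.range (k+1), if j % S = (i : ℕ) then
            ((q₁ (j % S)).eval ((j / S : ℕ):ℂ) * ℓ₁ ^ (j / S)) *
            ((q₂ ((k-j) % S)).eval (((k-j) / S : ℕ):ℂ) * ℓ₂ ^ ((k-j) / S)) else 0)
          = F₁ i k + F₂ i k := by
        intro i _
        exact hFeq i k (le_trans (Finset.le_sup (Finset.mem_univ i))
          (le_trans (le_max_right _ _) hk))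
      rw [Finset.sum_congr rfl h2, Finset.sum_add_distrib]
    have hB : ∑ j ∈ Finset.range (k+1), e₁ j * G₂ (k-j) = HB k := by
      rw [hHB]
      symm
      apply Finset.sum_subset
      · intro x hx
        rw [Finset.mem_range] at *
        omega
      · intro x _ hx
        rw [Finset.mem_range] at hx
        rw [he₁0 x (by omega), zero_mul]
    have hC : ∑ j ∈ Finset.range (k+1), G₁ j * e₂ (k-j) = HC k := by
      have hrefl := Finset.sum_range_reflect (fun j => e₂ j * G₁ (k - j)) (k+1)
      have h3 : ∑ j ∈ Finset.range (k+1), G₁ j * e₂ (k-j) =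
          ∑ j ∈ Finset.range (k+1), e₂ j * G₁ (k - j) := by
        rw [← hrefl]
        apply Finset.sum_congr rfl
        intro j hj
        rw [Finset.mem_range] at hj
        have h4 : k + 1 - 1 - j = k - j := by omega
        have h5 : k - (k - j) = j := by omega
        rw [h4, h5]
        ring
      rw [h3, hHC]
      symm
      apply Finset.sum_subset
      · intro x hx
        rw [Finset.mem_range] at *
        omega
      · intro x _ hx
        rw [Finset.mem_range] at hx
        rw [he₂0 x (by omega), zero_mul]
    have hD : ∑ j ∈ Finset.range (k+1), e₁ j * e₂ (k-j) = 0 := by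
      apply Finset.sum_eq_zero
      intro j hj
      rw [Finset.mem_range] at hj
      by_cases hjK : K₁ ≤ j
      · rw [he₁0 j hjK, zero_mul]
      · rw [he₂0 (k - j) (by omega), mul_zero]
    rw [hA, hB, hC, hD]
    ring
  refine ⟨fun k => conv g₁ g₂ k - (CoreF₂ k + HB k), fun k => CoreF₂ k + HB k,
    ?_, mpe_add hCF₂pe hHBpe, fun k => by ring⟩
  apply mpe_congr Nbig (f := fun k => CoreF₁ k + HC k)
  · intro k hk
    rw [hMain k hk]
    ring
  · exact mpe_add hCF₁pe hHCpe
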